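/- arXiv:1506.05558 — 4 statements merged into one kernel-verified Lean document; each statement's English description precedes it below -/
import Mathlib

section
/- (Singleton bound for linear rank metric codes.) Let C be an 𝔽_q-linear subspace of the space M_{m×n}(q) of m×n matrices over 𝔽_q of dimension k, with minimum rank distance at least d, where 1 ≤ d ≤ min(m,n). Then k ≤ min{m(n−d+1), n(m−d+1)}. -/
lemma singleton_aux (m n d : ℕ) (K : Type*) [Field K] [Fintype K] [DecidableEq K]
    (hd1 : 1 ≤ d) (hdn : d ≤ n)
    (C : Submodule K (Matrix (Fin m) (Fin n) K))
    (hmin : ∀ A ∈ C, A ≠ 0 → d ≤ A.rank) :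
    Module.finrank K C ≤ m * (n - d + 1) := by
  set r := n - d + 1 with hr
  have hrn : r ≤ n := by omega
  let f : Matrix (Fin m) (Fin n) K →ₗ[K] Matrix (Fin m) (Fin r) K :=
    { toFun := fun A => A.submatrix id (Fin.castLE hrn)
      map_add' := fun A B => rfl
      map_smul' := fun c A => rfl }
  have hinj : Function.Injective (f ∘ₗ C.subtype) := by
    rw [← LinearMap.ker_eq_bot, LinearMap.ker_eq_bot']
    rintro ⟨A, hA⟩ hfA
    have hfA' : ∀ i (j : Fin r), A i (Fin.castLE hrn j) = 0 := by
      intro i j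
      have := congrFun (congrFun hfA i) j
      exact this
    ext : 1
    by_contra hA0
    have hd' := hmin A hA (by simpa using hA0)
    -- factor A through d-1 columns
    let g : Fin (d - 1) → Fin n := fun p => ⟨r + p, by omega⟩
    let P : Matrix (Fin (d - 1)) (Fin n) K := fun p j => if (g p : Fin n) = j then 1 else 0
    have hgval : ∀ p : Fin (d - 1), (g p : ℕ) = r + p := fun p => rfl
    have hfac : A = A.submatrix id g * P := by
      ext i j
      rw [Matrix.mul_apply]
      by_cases hj : (j : ℕ) < r
      · have hz := hfA' i ⟨(j : ℕ), hj⟩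
        rw [show Fin.castLE hrn ⟨(j : ℕ), hj⟩ = j from Fin.ext rfl] at hz
        rw [hz]
        refine (Finset.sum_eq_zero ?_).symm
        intro p _
        have : (g p : Fin n) ≠ j := by
          intro h
          have h2 : (g p : ℕ) = (j : ℕ) := by rw [h]
          rw [hgval] at h2; omega
        simp [P, this]
      · have hjr : r ≤ (j : ℕ) := le_of_not_gt hj
        have hjn : (j : ℕ) - r < d - 1 := by omega
        rw [Finset.sum_eq_single ⟨(j : ℕ) - r, hjn⟩]
        · have hgj : g ⟨(j : ℕ) - r, hjn⟩ = j := by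
            apply Fin.ext; rw [hgval]; simp; omega
          simp [P, hgj, Matrix.submatrix_apply]
        · intro p _ hp
          have : (g p : Fin n) ≠ j := by
            intro h
            apply hp
            apply Fin.ext
            have h2 : (g p : ℕ) = (j : ℕ) := by rw [h]
            rw [hgval] at h2; simp; omega
          simp [P, this]
        · intro h; exact absurd (Finset.mem_univ _) h
    have h1 : A.rank ≤ d - 1 := by
      calc A.rank = (A.submatrix id g * P).rank := by rw [← hfac]
        _ ≤ (A.submatrix id g).rank := Matrix.rank_mul_le_left _ _
        _ ≤ Fintype.card (Fin (d - 1)) := Matrix.rank_le_card_width _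
        _ = d - 1 := Fintype.card_fin _
    omega
  calc Module.finrank K C ≤ Module.finrank K (Matrix (Fin m) (Fin r) K) :=
        LinearMap.finrank_le_finrank_of_injective hinj
    _ = m * r := by simp [Module.finrank_matrix]

/-- Singleton bound for linear rank metric codes: if `C` is a `k`-dimensional
`𝔽_q`-linear subspace of `M_{m×n}(q)` with minimum rank distance at least `d`,
`1 ≤ d ≤ min m n`, then `k ≤ min {m(n-d+1), n(m-d+1)}`. -/
theorem singleton_bound_linear_rank_metric
    (m n d k : ℕ) (K : Type*) [Field K] [Fintype K] [DecidableEq K]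
    (hd1 : 1 ≤ d) (hd : d ≤ min m n)
    (C : Submodule K (Matrix (Fin m) (Fin n) K))
    (hk : Module.finrank K C = k)
    (hmin : ∀ A ∈ C, ∀ B ∈ C, A ≠ B → d ≤ (A - B).rank) :
    k ≤ min (m * (n - d + 1)) (n * (m - d + 1)) := by
  have hmin' : ∀ A ∈ C, A ≠ 0 → d ≤ A.rank := by
    intro A hA hA0
    have := hmin A hA 0 C.zero_mem hA0
    simpa using this
  subst hk
  refine le_min ?_ ?_
  · exact singleton_aux m n d K hd1 (hd.trans (min_le_right _ _)) C hmin'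
  · let e := Matrix.transposeLinearEquiv (Fin m) (Fin n) K K
    let C' := C.map (e : Matrix (Fin m) (Fin n) K →ₗ[K] Matrix (Fin n) (Fin m) K)
    have hC' : Module.finrank K C = Module.finrank K C' :=
      (LinearEquiv.finrank_map_eq e C).symm
    rw [hC']
    refine singleton_aux n m d K hd1 (hd.trans (min_le_left _ _)) C' ?_
    rintro B hB hB0
    obtain ⟨A, hA, rfl⟩ := hB
    have hA0 : A ≠ 0 := by
      intro h
      apply hB0
      simp [h, e, Matrix.transposeLinearEquiv]
    have := hmin' A hA hA0
    simpa [e, Matrix.transposeLinearEquiv, Matrix.rank_transpose] using this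
end

section
/- Let F be an a×b Ferrers diagram, let d ≥ 1, and fix an integer i with 0 ≤ i ≤ d−1. Let v_i be the number of dots of F that are not contained in the first i rows and not contained in the rightmost d−1−i columns (i.e., v_i = |{(r,c) ∈ F : r > i and c ≤ b−(d−1−i)}|). Let C be a set of a×b matrices over 𝔽_q all of whose entries in positions not in F are zero, such that rank(X−Y) ≥ d for all distinct X, Y ∈ C. Then the map sending each codeword to its restriction to the positions (r,c) ∈ F with r > i and c ≤ b−(d−1−i) is injective on C, and consequently |C| ≤ q^(v_i). -/
open Module Submodule Matrix

private lemma matrix_rank_add_le {m n : ℕ} {K : Type*} [Field K]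
    (A B : Matrix (Fin m) (Fin n) K) : (A + B).rank ≤ A.rank + B.rank := by
  have hle : LinearMap.range (A + B).mulVecLin ≤
      LinearMap.range A.mulVecLin ⊔ LinearMap.range B.mulVecLin := by
    rintro _ ⟨v, rfl⟩
    have : (A + B).mulVecLin v = A.mulVecLin v + B.mulVecLin v := by
      simp [Matrix.mulVecLin, Matrix.add_mulVec]
    rw [this]
    exact Submodule.add_mem_sup ⟨v, rfl⟩ ⟨v, rfl⟩
  calc (A + B).rank ≤ finrank K ↥(LinearMap.range A.mulVecLin ⊔ LinearMap.range B.mulVecLin) :=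
        Submodule.finrank_mono hle
    _ ≤ A.rank + B.rank := Submodule.finrank_add_le_finrank_add_finrank _ _

private lemma matrix_rank_le_card_cols {m n : ℕ} {K : Type*} [Field K] [DecidableEq K]
    (M : Matrix (Fin m) (Fin n) K) (S : Finset (Fin n))
    (h : ∀ r c, M r c ≠ 0 → c ∈ S) : M.rank ≤ S.card := by
  classical
  have hle : LinearMap.range M.mulVecLin ≤
      Submodule.span K ((S.image (fun c => Mᵀ c) : Finset (Fin m → K)) : Set (Fin m → K)) := by
    rw [Matrix.range_mulVecLin]
    apply Submodule.span_le.2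
    rintro _ ⟨c, rfl⟩
    by_cases hc : c ∈ S
    · exact Submodule.subset_span (Finset.mem_coe.2 (Finset.mem_image_of_mem _ hc))
    · have hz : Mᵀ c = 0 := funext fun r => by
        by_contra hne
        exact hc (h r c hne)
      rw [show M.col c = 0 from hz]
      exact Submodule.zero_mem _
  calc M.rank ≤ finrank K ↥(Submodule.span K
        ((S.image (fun c => Mᵀ c) : Finset (Fin m → K)) : Set (Fin m → K))) :=
        Submodule.finrank_mono hle
    _ ≤ (S.image (fun c => Mᵀ c)).card := finrank_span_finset_le_card _
    _ ≤ S.card := Finset.card_image_le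

/-- Puncturing a generalized Ferrers diagram rank metric code: fix `0 ≤ i ≤ d - 1` and
let `v_i` be the number of dots of the Ferrers diagram `F` outside the first `i` rows
and outside the rightmost `d - 1 - i` columns.  If `C` is a set of `a × b` matrices
supported on `F` with pairwise rank distance at least `d`, then restriction to those
`v_i` positions is injective on `C`, and consequently `|C| ≤ q^(v_i)`. -/
theorem ferrers_diagram_puncturing
    (q a b d i : ℕ) (K : Type*) [Field K] [Fintype K] [DecidableEq K]
    (hq : Fintype.card K = q)
    (hd : 1 ≤ d) (hi : i ≤ d - 1)
    (F : Finset (Fin a × Fin b))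
    (hFright : ∀ p ∈ F, ∀ c' : Fin b, p.2 ≤ c' → (p.1, c') ∈ F)
    (hFup : ∀ p ∈ F, ∀ r' : Fin a, r' ≤ p.1 → (r', p.2) ∈ F)
    (C : Finset (Matrix (Fin a) (Fin b) K))
    (hsupp : ∀ X ∈ C, ∀ (r : Fin a) (c : Fin b), (r, c) ∉ F → X r c = 0)
    (hmin : ∀ X ∈ C, ∀ Y ∈ C, X ≠ Y → d ≤ (X - Y).rank) :
    Set.InjOn (fun X : Matrix (Fin a) (Fin b) K =>
        fun p : {p : Fin a × Fin b //
            p ∈ F ∧ i ≤ (p.1 : ℕ) ∧ (p.2 : ℕ) < b - (d - 1 - i)} => X p.1.1 p.1.2)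
      (C : Set (Matrix (Fin a) (Fin b) K))
    ∧ C.card ≤
        q ^ (F.filter (fun p => i ≤ (p.1 : ℕ) ∧ (p.2 : ℕ) < b - (d - 1 - i))).card := by
  classical
  set k := d - 1 - i with hk
  have hinj : Set.InjOn (fun X : Matrix (Fin a) (Fin b) K =>
        fun p : {p : Fin a × Fin b //
            p ∈ F ∧ i ≤ (p.1 : ℕ) ∧ (p.2 : ℕ) < b - (d - 1 - i)} => X p.1.1 p.1.2)
      (C : Set (Matrix (Fin a) (Fin b) K)) := by
    intro X hX Y hY hXY
    by_contra hne
    have hrank := hmin X hX Y hY hne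
    set Z := X - Y with hZ
    -- every nonzero entry of Z has row < i or column ≥ b - k
    have hZsupp : ∀ r c, Z r c ≠ 0 → (r : ℕ) < i ∨ b - k ≤ (c : ℕ) := by
      intro r c hne'
      by_contra hcon
      push_neg at hcon
      obtain ⟨h1, h2⟩ := hcon
      have hmemF : (r, c) ∈ F := by
        by_contra hF
        apply hne'
        simp [hZ, Matrix.sub_apply, hsupp X hX r c hF, hsupp Y hY r c hF]
      have : X r c = Y r c := congrFun hXY ⟨(r, c), hmemF, h1, h2⟩
      apply hne'
      simp [hZ, Matrix.sub_apply, this]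
    set Z1 : Matrix (Fin a) (Fin b) K :=
      fun r c => if (r : ℕ) < i then Z r c else 0 with hZ1
    set Z2 : Matrix (Fin a) (Fin b) K := Z - Z1 with hZ2
    have hsum : Z = Z1 + Z2 := by
      simp [hZ2]
    -- rank Z1 ≤ i
    have hr1 : Z1.rank ≤ i := by
      have := matrix_rank_le_card_cols Z1ᵀ (Finset.univ.filter fun r : Fin a => (r : ℕ) < i)
        (by
          intro c r h
          simp only [Matrix.transpose_apply, hZ1] at h
          by_cases hr : (r : ℕ) < i
          · simp [hr]
          · exact (h (by show (if (r : ℕ) < i then Z r c else 0) = 0; simp [hr])).elim)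
      rw [Matrix.rank_transpose] at this
      refine this.trans ?_
      have : ((Finset.univ.filter fun r : Fin a => (r : ℕ) < i)).card ≤ (Finset.range i).card := by
        refine Finset.card_le_card_of_injOn (fun r => (r : ℕ)) ?_ ?_
        · intro r hr
          simp only [Finset.mem_coe, Finset.mem_filter] at hr
          simp [hr.2]
        · intro x _ y _ h
          exact Fin.val_injective h
      simpa using this
    -- rank Z2 ≤ k
    have hr2 : Z2.rank ≤ k := by
      have := matrix_rank_le_card_cols Z2 (Finset.univ.filter fun c : Fin b => b - k ≤ (c : ℕ))
        (by
          intro r c h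
          simp only [hZ2, Matrix.sub_apply, hZ1] at h
          by_cases hr : (r : ℕ) < i
          · exact (h (by show Z r c - (if (r : ℕ) < i then Z r c else 0) = 0; simp [hr])).elim
          · change ¬(Z r c - (if (r : ℕ) < i then Z r c else 0) = 0) at h
            simp only [hr, if_false, sub_zero] at h
            rcases hZsupp r c h with h' | h'
            · omega
            · simp only [Finset.mem_filter, Finset.mem_univ, true_and]
              omega)
      refine this.trans ?_
      have : ((Finset.univ.filter fun c : Fin b => b - k ≤ (c : ℕ))).card ≤
          (Finset.range k).card := by
        refine Finset.card_le_card_of_injOn (fun c => (c : ℕ) - (b - k)) ?_ ?_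
        · intro c hc
          simp only [Finset.mem_coe, Finset.mem_filter] at hc
          have := c.isLt
          simp only [Finset.mem_coe, Finset.mem_range]
          show (c : ℕ) - (b - k) < k
          omega
        · intro x hx y hy h
          simp only [Finset.mem_coe, Finset.mem_filter] at hx hy
          apply Fin.val_injective
          simp only at h
          omega
      simpa using this
    have : Z.rank ≤ i + k := by
      rw [hsum]
      exact (matrix_rank_add_le Z1 Z2).trans (add_le_add hr1 hr2)
    omega
  refine ⟨hinj, ?_⟩
  -- cardinality bound
  have hcard : C.card ≤ Fintype.card
      ({p : Fin a × Fin b // p ∈ F ∧ i ≤ (p.1 : ℕ) ∧ (p.2 : ℕ) < b - (d - 1 - i)} → K) := by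
    rw [← Finset.card_univ]
    apply Finset.card_le_card_of_injOn _ (fun _ _ => Finset.mem_univ _)
    exact hinj
  rw [Fintype.card_fun, hq, Fintype.card_subtype] at hcard
  refine hcard.trans (le_of_eq ?_)
  congr 1
  congr 1
  ext p
  simp [Finset.mem_filter, and_assoc, hk]
end

section
/- (Singleton bound for generalized Ferrers diagram rank metric codes.) Let F be an a×b Ferrers diagram and d ≥ 1. For each integer i with 0 ≤ i ≤ d−1, let v_i be the number of dots of F that are not contained in the first i rows and not contained in the rightmost d−1−i columns (i.e., v_i = |{(r,c) ∈ F : r > i and c ≤ b−(d−1−i)}|). If C is a set of a×b matrices over 𝔽_q all of whose entries at positions not in F are zero and rank(X−Y) ≥ d for all distinct X, Y ∈ C, then |C| ≤ q^(min_{0≤i≤d−1} v_i). -/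
open Module Matrix

/-- If every nonzero entry of `Z` is in one of the first `i` rows or one of the
last `j` columns, then `Z.rank ≤ i + j`. -/
lemma aux_rank_le {a b : ℕ} {K : Type*} [Field K] [DecidableEq K]
    (i j : ℕ) (Z : Matrix (Fin a) (Fin b) K)
    (h : ∀ r c, Z r c ≠ 0 → (r : ℕ) < i ∨ b - j ≤ (c : ℕ)) :
    Z.rank ≤ i + j := by
  classical
  set A : Finset (Fin a) := Finset.univ.filter (fun r => (r : ℕ) < i) with hA
  set B : Finset (Fin b) := Finset.univ.filter (fun c => b - j ≤ (c : ℕ)) with hB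
  set T : Finset (Fin a → K) :=
    B.image (fun c => Z.transpose c) ∪ A.image (fun r => Pi.single r (1 : K)) with hT
  have hcol : ∀ c : Fin b, Z.transpose c ∈ Submodule.span K (T : Set (Fin a → K)) := by
    intro c
    by_cases hc : b - j ≤ (c : ℕ)
    · apply Submodule.subset_span
      refine Finset.mem_coe.mpr (Finset.mem_union_left _ (Finset.mem_image_of_mem _ ?_))
      exact Finset.mem_filter.mpr ⟨Finset.mem_univ _, hc⟩
    · have hsum : Z.transpose c = ∑ r ∈ A, Z r c • (Pi.single r (1 : K) : Fin a → K) := by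
        funext r'
        rw [Finset.sum_apply]
        simp only [Pi.smul_apply]
        have : ∀ r ∈ A, Z r c • (Pi.single r (1 : K) : Fin a → K) r'
            = if r = r' then Z r c else 0 := by
          intro r _
          by_cases hrr : r = r'
          · subst hrr; simp
          · simp [Pi.single_apply, hrr]
        rw [Finset.sum_congr rfl this]
        by_cases hr' : r' ∈ A
        · rw [Finset.sum_ite_eq' A r' (fun r => Z r c)]
          simp [hr']
        · rw [Finset.sum_ite_eq' A r' (fun r => Z r c)]
          simp only [hr', if_false]
          have : Z r' c = 0 := by
            by_contra hz
            rcases h r' c hz with h1 | h2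
            · exact hr' (by simp [hA, h1])
            · exact hc h2
          simp [Matrix.transpose_apply, this]
      rw [hsum]
      apply Submodule.sum_mem
      intro r hr
      apply Submodule.smul_mem
      apply Submodule.subset_span
      exact Finset.mem_coe.mpr (Finset.mem_union_right _ (Finset.mem_image_of_mem _ hr))
  have hspan : Submodule.span K (Set.range Z.transpose) ≤ Submodule.span K (T : Set (Fin a → K)) :=
    Submodule.span_le.mpr (by rintro _ ⟨c, rfl⟩; exact hcol c)
  have h1 : Z.rank = finrank K (Submodule.span K (Set.range Z.transpose)) :=
    Z.rank_eq_finrank_span_cols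
  have h2 : finrank K (Submodule.span K (Set.range Z.transpose))
      ≤ finrank K (Submodule.span K (T : Set (Fin a → K))) :=
    Submodule.finrank_mono hspan
  have h3 : finrank K (Submodule.span K (T : Set (Fin a → K))) ≤ T.card :=
    finrank_span_finset_le_card T
  have hAcard : A.card ≤ i := by
    have hle : A.card ≤ (Finset.range i).card := by
      apply Finset.card_le_card_of_injOn (fun r : Fin a => (r : ℕ))
      · intro r hr
        exact Finset.mem_range.mpr (Finset.mem_filter.mp hr).2
      · intro r₁ _ r₂ _ hr
        exact Fin.val_injective hr
    simpa using hle
  have hBcard : B.card ≤ j := by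
    have hle : B.card ≤ (Finset.range j).card := by
      apply Finset.card_le_card_of_injOn (fun c : Fin b => (c : ℕ) - (b - j))
      · intro c hc
        have h1 := (Finset.mem_filter.mp hc).2
        have h2 := c.isLt
        exact Finset.mem_range.mpr (by dsimp only; omega)
      · intro c₁ hc₁ c₂ hc₂ hc
        have h1 := (Finset.mem_filter.mp (Finset.mem_coe.mp hc₁)).2
        have h1' := (Finset.mem_filter.mp (Finset.mem_coe.mp hc₂)).2
        have h3 : (c₁ : ℕ) - (b - j) = (c₂ : ℕ) - (b - j) := hc
        exact Fin.val_injective (by omega)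
    simpa using hle
  have hTcard : T.card ≤ j + i := by
    calc T.card ≤ (B.image (fun c => Z.transpose c)).card + (A.image (fun r => Pi.single r (1 : K))).card :=
          Finset.card_union_le _ _
      _ ≤ B.card + A.card := by
          gcongr <;> exact Finset.card_image_le
      _ ≤ j + i := by omega
  omega

/-- The per-`i` counting bound. -/
lemma aux_card_bound (q a b d i : ℕ) (K : Type*) [Field K] [Fintype K] [DecidableEq K]
    (hq : Fintype.card K = q) (hi' : i < d)
    (F : Finset (Fin a × Fin b))
    (C : Finset (Matrix (Fin a) (Fin b) K))
    (hsupp : ∀ X ∈ C, ∀ (r : Fin a) (c : Fin b), (r, c) ∉ F → X r c = 0)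
    (hmin : ∀ X ∈ C, ∀ Y ∈ C, X ≠ Y → d ≤ (X - Y).rank) :
    C.card ≤ q ^ (F.filter
      (fun p => i ≤ (p.1 : ℕ) ∧ (p.2 : ℕ) < b - (d - 1 - i))).card := by
  classical
  set S : Finset (Fin a × Fin b) :=
    F.filter (fun p => i ≤ (p.1 : ℕ) ∧ (p.2 : ℕ) < b - (d - 1 - i)) with hS
  have hinj : ∀ X ∈ C, ∀ Y ∈ C, (∀ p ∈ S, X p.1 p.2 = Y p.1 p.2) → X = Y := by
    intro X hX Y hY hXY
    by_contra hne
    have hrank := hmin X hX Y hY hne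
    have hle : (X - Y).rank ≤ i + (d - 1 - i) := by
      apply aux_rank_le
      intro r c hZ
      by_contra hcon
      push_neg at hcon
      apply hZ
      have hF : (r, c) ∈ F := by
        by_contra hF
        apply hZ
        simp [Matrix.sub_apply, hsupp X hX r c hF, hsupp Y hY r c hF]
      have hmem : (r, c) ∈ S := Finset.mem_filter.mpr ⟨hF, ⟨hcon.1, hcon.2⟩⟩
      have := hXY (r, c) hmem
      simp only [Matrix.sub_apply]
      simp only at this
      rw [this, sub_self]
    omega
  have hcount : C.card ≤ (Finset.univ : Finset ({p // p ∈ S} → K)).card := by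
    apply Finset.card_le_card_of_injOn
      (fun X => (fun p : {p // p ∈ S} => X p.1.1 p.1.2))
      (fun _ _ => Finset.mem_univ _)
    intro X hX Y hY hf
    apply hinj X hX Y hY
    intro p hp
    have := congrFun hf ⟨p, hp⟩
    simpa using this
  exact hcount.trans
    (by rw [Finset.card_univ, Fintype.card_fun, hq, Fintype.card_coe])

/-- Singleton bound for generalized Ferrers diagram rank metric codes: with
`v_i = |{(r,c) ∈ F : r outside the first i rows, c outside the last d-1-i columns}|`,
any set `C` of `a × b` matrices supported on the Ferrers diagram `F` with pairwise rank
distance at least `d` satisfies `|C| ≤ q^(min_{0 ≤ i ≤ d-1} v_i)`. -/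
theorem singleton_bound_generalized_ferrers
    (q a b d : ℕ) (K : Type*) [Field K] [Fintype K] [DecidableEq K]
    (hq : Fintype.card K = q)
    (hd : 1 ≤ d)
    (F : Finset (Fin a × Fin b))
    (hFright : ∀ p ∈ F, ∀ c' : Fin b, p.2 ≤ c' → (p.1, c') ∈ F)
    (hFup : ∀ p ∈ F, ∀ r' : Fin a, r' ≤ p.1 → (r', p.2) ∈ F)
    (C : Finset (Matrix (Fin a) (Fin b) K))
    (hsupp : ∀ X ∈ C, ∀ (r : Fin a) (c : Fin b), (r, c) ∉ F → X r c = 0)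
    (hmin : ∀ X ∈ C, ∀ Y ∈ C, X ≠ Y → d ≤ (X - Y).rank) :
    C.card ≤ q ^ ((Finset.range d).inf'
      (Finset.nonempty_range_iff.mpr (by omega))
      (fun i => (F.filter
        (fun p => i ≤ (p.1 : ℕ) ∧ (p.2 : ℕ) < b - (d - 1 - i))).card)) := by
  classical
  obtain ⟨i, hi, hEq⟩ := Finset.exists_mem_eq_inf'
    (Finset.nonempty_range_iff.mpr (by omega : d ≠ 0))
    (fun i => (F.filter
      (fun p : Fin a × Fin b => i ≤ (p.1 : ℕ) ∧ (p.2 : ℕ) < b - (d - 1 - i))).card)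
  have hi' : i < d := Finset.mem_range.mp hi
  exact (aux_card_bound q a b d i K hq hi' F C hsupp hmin).trans_eq
    (congrArg (fun n => q ^ n) hEq).symm
end

section
/- (Etzion–Silberstein bound for linear Ferrers diagram rank metric codes.) Let F be an a×b Ferrers diagram and d ≥ 1. For each integer i with 0 ≤ i ≤ d−1, let v_i be the number of dots of F not contained in the first i rows and not contained in the rightmost d−1−i columns. If C is an 𝔽_q-linear subspace of the space of a×b matrices over 𝔽_q of dimension p such that every codeword has zero entries at all positions not in F and every nonzero codeword has rank at least d, then p ≤ min_{0≤i≤d−1} v_i. -/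
open Matrix

private lemma my_rank_add_le {m n K : Type*} [Fintype m] [Fintype n] [Field K]
    (A B : Matrix m n K) : (A + B).rank ≤ A.rank + B.rank := by
  classical
  have h : LinearMap.range (A + B).mulVecLin ≤
      LinearMap.range A.mulVecLin ⊔ LinearMap.range B.mulVecLin := by
    rintro x ⟨v, rfl⟩
    rw [Matrix.mulVecLin_add]
    exact Submodule.mem_sup.mpr ⟨A.mulVecLin v, ⟨v, rfl⟩, B.mulVecLin v, ⟨v, rfl⟩, rfl⟩
  calc (A + B).rank
      ≤ Module.finrank K
          ↥(LinearMap.range A.mulVecLin ⊔ LinearMap.range B.mulVecLin) :=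
        Submodule.finrank_mono h
    _ ≤ A.rank + B.rank := by
        have := Submodule.finrank_sup_add_finrank_inf_eq
          (LinearMap.range A.mulVecLin) (LinearMap.range B.mulVecLin)
        unfold Matrix.rank
        omega

private lemma my_rank_sum_le {m n K ι : Type*} [Fintype m] [Fintype n] [Field K]
    (s : Finset ι) (f : ι → Matrix m n K) :
    (∑ x ∈ s, f x).rank ≤ ∑ x ∈ s, (f x).rank := by
  classical
  induction s using Finset.cons_induction with
  | empty => simp
  | cons a s ha ih =>
    rw [Finset.sum_cons, Finset.sum_cons]
    exact (my_rank_add_le _ _).trans (by omega)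

private lemma my_rank_vecMulVec_le {m n K : Type*} [Fintype m] [Fintype n] [Field K]
    (u : m → K) (v : n → K) : (Matrix.vecMulVec u v).rank ≤ 1 := by
  classical
  rw [Matrix.vecMulVec_eq (Fin 1)]
  exact (Matrix.rank_mul_le_left _ _).trans
    ((Matrix.rank_le_card_width _).trans (by simp))

private lemma my_rank_le_card_rows {m n K : Type*} [Fintype m] [Fintype n] [Field K]
    [DecidableEq m] (X : Matrix m n K) (S : Finset m)
    (h : ∀ r, r ∉ S → ∀ c, X r c = 0) : X.rank ≤ S.card := by
  classical
  have hX : X = ∑ r ∈ S, Matrix.vecMulVec (Pi.single r 1) (X r) := by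
    ext r c
    rw [Matrix.sum_apply]
    simp only [Matrix.vecMulVec_apply]
    by_cases hr : r ∈ S
    · rw [Finset.sum_eq_single r]
      · simp
      · intro b _ hb; simp [Pi.single_apply, hb.symm]
      · intro h'; exact absurd hr h'
    · rw [h r hr c, Finset.sum_eq_zero]
      intro b hb
      have : b ≠ r := fun e => hr (e ▸ hb)
      simp [Pi.single_apply, this.symm]
  calc X.rank ≤ ∑ r ∈ S, (Matrix.vecMulVec (Pi.single r 1) (X r)).rank := by
        have h' := my_rank_sum_le S (fun r => Matrix.vecMulVec (Pi.single r 1) (X r))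
        rwa [← hX] at h'
    _ ≤ ∑ _r ∈ S, 1 := Finset.sum_le_sum fun r _ => my_rank_vecMulVec_le _ _
    _ = S.card := by simp

private lemma my_rank_le_card_cols {m n K : Type*} [Fintype m] [Fintype n] [Field K]
    [DecidableEq n] (X : Matrix m n K) (S : Finset n)
    (h : ∀ c, c ∉ S → ∀ r, X r c = 0) : X.rank ≤ S.card := by
  classical
  have hX : X = ∑ c ∈ S, Matrix.vecMulVec (fun r => X r c) (Pi.single c 1) := by
    ext r c
    rw [Matrix.sum_apply]
    simp only [Matrix.vecMulVec_apply]
    by_cases hc : c ∈ S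
    · rw [Finset.sum_eq_single c]
      · simp
      · intro b _ hb; simp [Pi.single_apply, hb]
      · intro h'; exact absurd hc h'
    · rw [h c hc r, Finset.sum_eq_zero]
      intro b hb
      have : b ≠ c := fun e => hc (e ▸ hb)
      simp [Pi.single_apply, this]
  calc X.rank ≤ ∑ c ∈ S, (Matrix.vecMulVec (fun r => X r c) (Pi.single c 1)).rank := by
        have h' := my_rank_sum_le S (fun c => Matrix.vecMulVec (fun r => X r c) (Pi.single c 1))
        rwa [← hX] at h'
    _ ≤ ∑ _c ∈ S, 1 := Finset.sum_le_sum fun c _ => my_rank_vecMulVec_le _ _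
    _ = S.card := by simp

/-- If every nonzero entry of `X` lies in one of the first `i` rows or one of the
columns with index `≥ b - k`, then `rank X ≤ i + k`. -/
private lemma my_rank_le_of_support {a b : ℕ} {K : Type*} [Field K]
    (X : Matrix (Fin a) (Fin b) K) (i k : ℕ)
    (h : ∀ r c, X r c ≠ 0 → (r : ℕ) < i ∨ b - k ≤ (c : ℕ)) :
    X.rank ≤ i + k := by
  classical
  set X₁ : Matrix (Fin a) (Fin b) K := fun r c => if (r : ℕ) < i then X r c else 0 with hX₁
  have hsplit : X = X₁ + (X - X₁) := by abel
  have h1 : X₁.rank ≤ i := by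
    refine le_trans (my_rank_le_card_rows X₁
      (Finset.univ.filter (fun r : Fin a => (r : ℕ) < i)) ?_) ?_
    · intro r hr c
      simp only [Finset.mem_filter, Finset.mem_univ, true_and, not_lt] at hr
      simp [hX₁, Nat.not_lt.mpr hr]
    · refine le_trans (Finset.card_le_card_of_injOn (t := Finset.range i) (fun r => (r : ℕ))
        (fun r hr => ?_) (fun x _ y _ hxy => Fin.val_injective hxy)) (Finset.card_range i).le
      simp only [Finset.mem_coe, Finset.mem_filter, Finset.mem_univ, true_and] at hr
      exact Finset.mem_range.mpr hr
  have h2 : (X - X₁).rank ≤ k := by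
    refine le_trans (my_rank_le_card_cols (X - X₁)
      (Finset.univ.filter (fun c : Fin b => b - k ≤ (c : ℕ))) ?_) ?_
    · intro c hc r
      simp only [Finset.mem_filter, Finset.mem_univ, true_and, not_le] at hc
      rw [Matrix.sub_apply]; simp only [hX₁]
      by_cases hr : (r : ℕ) < i
      · simp [hr]
      · simp only [if_neg hr, sub_zero]
        by_contra hne
        rcases h r c hne with h' | h'
        · exact hr h'
        · omega
    · refine le_trans (Finset.card_le_card_of_injOn (t := Finset.range k) (fun c => (c : ℕ) - (b - k))
        (fun c hc => ?_) (fun x hx y hy hxy => ?_)) (Finset.card_range k).le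
      · simp only [Finset.mem_coe, Finset.mem_filter, Finset.mem_univ, true_and] at hc
        have := c.isLt
        have : (c : ℕ) - (b - k) ∈ Finset.range k := Finset.mem_range.mpr (by omega)
        exact this
      · simp only [Finset.mem_coe, Finset.mem_filter, Finset.mem_univ, true_and] at hx hy
        have hxy' : (x : ℕ) - (b - k) = (y : ℕ) - (b - k) := hxy
        exact Fin.val_injective (by omega)
  calc X.rank = (X₁ + (X - X₁)).rank := by rw [← hsplit]
    _ ≤ X₁.rank + (X - X₁).rank := my_rank_add_le _ _
    _ ≤ i + k := Nat.add_le_add h1 h2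

/-- Etzion–Silberstein bound for linear Ferrers diagram rank metric codes: with
`v_i = |{(r,c) ∈ F : r outside the first i rows, c outside the last d-1-i columns}|`,
any `p`-dimensional `𝔽_q`-linear code of `a × b` matrices supported on the Ferrers
diagram `F` in which every nonzero codeword has rank at least `d` satisfies
`p ≤ min_{0 ≤ i ≤ d-1} v_i`. -/
theorem etzion_silberstein_bound
    (a b d p : ℕ) (K : Type*) [Field K] [Fintype K] [DecidableEq K]
    (hd : 1 ≤ d)
    (F : Finset (Fin a × Fin b))
    (hFright : ∀ q ∈ F, ∀ c' : Fin b, q.2 ≤ c' → (q.1, c') ∈ F)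
    (hFup : ∀ q ∈ F, ∀ r' : Fin a, r' ≤ q.1 → (r', q.2) ∈ F)
    (C : Submodule K (Matrix (Fin a) (Fin b) K))
    (hp : Module.finrank K C = p)
    (hsupp : ∀ X ∈ C, ∀ (r : Fin a) (c : Fin b), (r, c) ∉ F → X r c = 0)
    (hmin : ∀ X ∈ C, X ≠ 0 → d ≤ Matrix.rank X) :
    p ≤ (Finset.range d).inf'
      (Finset.nonempty_range_iff.mpr (by omega))
      (fun i => (F.filter
        (fun q => i ≤ (q.1 : ℕ) ∧ (q.2 : ℕ) < b - (d - 1 - i))).card) := by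
  classical
  refine Finset.le_inf' _ _ fun i hi => ?_
  rw [Finset.mem_range] at hi
  set Fi : Finset (Fin a × Fin b) :=
    F.filter (fun q => i ≤ (q.1 : ℕ) ∧ (q.2 : ℕ) < b - (d - 1 - i)) with hFi
  -- the projection onto the coordinates in `Fi`
  let φ : C →ₗ[K] (↥Fi → K) :=
    { toFun := fun X s => (X : Matrix (Fin a) (Fin b) K) s.1.1 s.1.2
      map_add' := fun X Y => rfl
      map_smul' := fun c X => rfl }
  have hinj : Function.Injective φ := by
    rw [← LinearMap.ker_eq_bot, LinearMap.ker_eq_bot']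
    intro X hX
    by_contra hne
    have hXC := X.2
    have hXne : (X : Matrix (Fin a) (Fin b) K) ≠ 0 := by
      intro h
      exact hne (Subtype.ext h)
    have hrank := hmin X hXC hXne
    have hbound : Matrix.rank (X : Matrix (Fin a) (Fin b) K) ≤ i + (d - 1 - i) := by
      apply my_rank_le_of_support
      intro r c hrc
      by_cases hF : (r, c) ∈ F
      · by_contra hcon
        push_neg at hcon
        obtain ⟨h1, h2⟩ := hcon
        have hmem : (r, c) ∈ Fi := by
          rw [hFi, Finset.mem_filter]
          exact ⟨hF, h1, h2⟩
        have := congrFun hX ⟨(r, c), hmem⟩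
        exact hrc this
      · exact absurd (hsupp X hXC r c hF) hrc
    omega
  have hfin : Module.finrank K C ≤ Module.finrank K (↥Fi → K) :=
    LinearMap.finrank_le_finrank_of_injective hinj
  rw [hp, Module.finrank_fintype_fun_eq_card, Fintype.card_coe] at hfin
  exact hfin
end
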